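/- With v(A,B) ∈ ℝ^{(Fin 3 × Fin 3) × V_A × V_B} the deterministic probability vector of a pair (A,B) of deterministic Alice and Bob strategies for the Magic Square game, the affine span of the set of all vectors v(A,B) (over all 4³ × 4³ deterministic pairs) has dimension 99. That is, the local polytope Ω_{34} with 3 inputs and 4 outputs per side is full-dimensional in the 99-dimensional no-signalling probability space. -/

import Mathlib

/-- Alice's admissible outputs for the Magic Square game: triples of bits with
even parity. -/
def MagicVA : Type := {a : Fin 3 → ZMod 2 // a 0 + a 1 + a 2 = 0}

/-- Bob's admissible outputs for the Magic Square game: triples of bits with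
odd parity. -/
def MagicVB : Type := {b : Fin 3 → ZMod 2 // b 0 + b 1 + b 2 = 1}

instance : Fintype MagicVA := by unfold MagicVA; infer_instance
instance : Fintype MagicVB := by unfold MagicVB; infer_instance
instance : DecidableEq MagicVA := by unfold MagicVA; infer_instance
instance : DecidableEq MagicVB := by unfold MagicVB; infer_instance

/-- The deterministic probability vector associated to a pair of deterministic
strategies `A : Fin 3 → MagicVA`, `B : Fin 3 → MagicVB`: its entry at
`((x, y), a, b)` is `1` if `A x = a` and `B y = b`, and `0` otherwise. -/
def detVector (A : Fin 3 → MagicVA) (B : Fin 3 → MagicVB) :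
    ((Fin 3 × Fin 3) × MagicVA × MagicVB) → ℝ :=
  fun q => if A q.1.1 = q.2.1 ∧ B q.1.2 = q.2.2 then 1 else 0

namespace MagicAux

abbrev Idx := (Fin 3 × Fin 3) × MagicVA × MagicVB

def aa (k : Fin 4) : MagicVA := ⟨![![0,0,0], ![0,1,1], ![1,0,1], ![1,1,0]] k, by fin_cases k <;> decide⟩
def bb (k : Fin 4) : MagicVB := ⟨![![1,1,1], ![1,0,0], ![0,1,0], ![0,0,1]] k, by fin_cases k <;> decide⟩
def singleA (x : Fin 3) (v : MagicVA) : Fin 3 → MagicVA := fun y => if y = x then v else aa 0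
def singleB (y : Fin 3) (v : MagicVB) : Fin 3 → MagicVB := fun z => if z = y then v else bb 0

def decA (A : Fin 3 → MagicVA) : Fin 4 → (Fin 3 → MagicVA) :=
  ![singleA 0 (A 0), singleA 1 (A 1), singleA 2 (A 2), fun _ => aa 0]
def decB (B : Fin 3 → MagicVB) : Fin 4 → (Fin 3 → MagicVB) :=
  ![singleB 0 (B 0), singleB 1 (B 1), singleB 2 (B 2), fun _ => bb 0]
def cc : Fin 4 → ℝ := ![1, 1, 1, -2]

lemma keyA (A : Fin 3 → MagicVA) (x : Fin 3) (a : MagicVA) :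
    (∑ k : Fin 4, cc k * (if decA A k x = a then (1:ℝ) else 0)) = (if A x = a then 1 else 0) := by
  have hx : x = 0 ∨ x = 1 ∨ x = 2 := by omega
  rcases hx with rfl | rfl | rfl <;>
  · simp only [Fin.sum_univ_four, decA, cc]
    simp (config := { decide := true }) only [singleA, Matrix.cons_val_zero, Matrix.cons_val_one,
      Matrix.head_cons, Matrix.cons_val_two, Matrix.tail_cons, Matrix.cons_val_three,
      if_true, if_false]
    split_ifs <;> ring

lemma keyB (B : Fin 3 → MagicVB) (y : Fin 3) (b : MagicVB) :
    (∑ k : Fin 4, cc k * (if decB B k y = b then (1:ℝ) else 0)) = (if B y = b then 1 else 0) := by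
  have hy : y = 0 ∨ y = 1 ∨ y = 2 := by omega
  rcases hy with rfl | rfl | rfl <;>
  · simp only [Fin.sum_univ_four, decB, cc]
    simp (config := { decide := true }) only [singleB, Matrix.cons_val_zero, Matrix.cons_val_one,
      Matrix.head_cons, Matrix.cons_val_two, Matrix.tail_cons, Matrix.cons_val_three,
      if_true, if_false]
    split_ifs <;> ring

lemma detVector_eq_mul (A B) (q : Idx) :
    detVector A B q
      = (if A q.1.1 = q.2.1 then (1:ℝ) else 0) * (if B q.1.2 = q.2.2 then 1 else 0) := by
  unfold detVector
  by_cases h1 : A q.1.1 = q.2.1 <;> by_cases h2 : B q.1.2 = q.2.2 <;> simp [h1, h2]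

lemma detVector_decomp (A B) :
    detVector A B = ∑ k : Fin 4, ∑ l : Fin 4, (cc k * cc l) • detVector (decA A k) (decB B l) := by
  funext q
  have h : (∑ k : Fin 4, cc k * (if decA A k q.1.1 = q.2.1 then (1:ℝ) else 0)) *
      (∑ l : Fin 4, cc l * (if decB B l q.1.2 = q.2.2 then (1:ℝ) else 0))
      = ∑ k : Fin 4, ∑ l : Fin 4, (cc k * cc l) *
        ((if decA A k q.1.1 = q.2.1 then (1:ℝ) else 0) *
          (if decB B l q.1.2 = q.2.2 then (1:ℝ) else 0)) := by
    rw [Finset.sum_mul_sum]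
    exact Finset.sum_congr rfl fun k _ => Finset.sum_congr rfl fun l _ => by ring
  rw [detVector_eq_mul, ← keyA A q.1.1 q.2.1, ← keyB B q.1.2 q.2.2, h]
  simp only [Finset.sum_apply, Pi.smul_apply, smul_eq_mul]
  exact Finset.sum_congr rfl fun k _ => Finset.sum_congr rfl fun l _ => by
    rw [detVector_eq_mul]

/-! ### The triangular family of 100 deterministic vectors -/

def LA : Fin 10 → (Fin 3 → MagicVA) :=
  ![singleA 0 (aa 0), singleA 0 (aa 1), singleA 0 (aa 2), singleA 0 (aa 3),
    singleA 1 (aa 1), singleA 1 (aa 2), singleA 1 (aa 3),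
    singleA 2 (aa 1), singleA 2 (aa 2), singleA 2 (aa 3)]
def LB : Fin 10 → (Fin 3 → MagicVB) :=
  ![singleB 0 (bb 0), singleB 0 (bb 1), singleB 0 (bb 2), singleB 0 (bb 3),
    singleB 1 (bb 1), singleB 1 (bb 2), singleB 1 (bb 3),
    singleB 2 (bb 1), singleB 2 (bb 2), singleB 2 (bb 3)]

def coordsA : Fin 10 → Fin 3 × MagicVA :=
  ![(0, aa 0), (0, aa 1), (0, aa 2), (0, aa 3), (1, aa 1), (1, aa 2), (1, aa 3),
    (2, aa 1), (2, aa 2), (2, aa 3)]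
def coordsB : Fin 10 → Fin 3 × MagicVB :=
  ![(0, bb 0), (0, bb 1), (0, bb 2), (0, bb 3), (1, bb 1), (1, bb 2), (1, bb 3),
    (2, bb 1), (2, bb 2), (2, bb 3)]

lemma diagA : ∀ k : Fin 10, LA k (coordsA k).1 = (coordsA k).2 := by decide
lemma diagB : ∀ k : Fin 10, LB k (coordsB k).1 = (coordsB k).2 := by decide
lemma triA : ∀ i k : Fin 10, i < k → ¬(LA i (coordsA k).1 = (coordsA k).2) := by decide
lemma triB : ∀ i k : Fin 10, i < k → ¬(LB i (coordsB k).1 = (coordsB k).2) := by decide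
lemma singleA_mem : ∀ (x : Fin 3) (a : MagicVA), ∃ k, singleA x a = LA k := by decide
lemma singleB_mem : ∀ (y : Fin 3) (b : MagicVB), ∃ k, singleB y b = LB k := by decide

def kdiv (k : Fin 100) : Fin 10 := ⟨k.1 / 10, by omega⟩
def kmod (k : Fin 100) : Fin 10 := ⟨k.1 % 10, by omega⟩

def ww (k : Fin 100) : Idx → ℝ := detVector (LA (kdiv k)) (LB (kmod k))
def qc (k : Fin 100) : Idx :=
  (((coordsA (kdiv k)).1, (coordsB (kmod k)).1), ((coordsA (kdiv k)).2, (coordsB (kmod k)).2))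

lemma ww_diag (k : Fin 100) : ww k (qc k) = 1 := by
  unfold ww qc detVector
  exact if_pos ⟨diagA _, diagB _⟩

lemma ww_tri (j k : Fin 100) (h : j < k) : ww j (qc k) = 0 := by
  unfold ww qc detVector
  apply if_neg
  rintro ⟨hA, hB⟩
  have H : (kdiv j) < (kdiv k) ∨ (kdiv j = kdiv k ∧ kmod j < kmod k) := by
    have hjk : j.1 < k.1 := h
    simp only [kdiv, kmod, Fin.lt_def, Fin.mk_lt_mk, Fin.ext_iff]
    omega
  rcases H with H | ⟨H1, H2⟩
  · exact triA _ _ H hA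
  · exact triB _ _ H2 hB

lemma li_tri {n : ℕ} {V : Type*} [AddCommGroup V] [Module ℝ V]
    (w : Fin n → V) (φ : Fin n → V →ₗ[ℝ] ℝ)
    (h1 : ∀ k, φ k (w k) = 1) (h0 : ∀ j k, j < k → φ k (w j) = 0) :
    LinearIndependent ℝ w := by
  rw [linearIndependent_iff']
  intro s g
  induction s using Finset.induction_on_max with
  | empty => intro _ i hi; simp at hi
  | insert a s ha ih =>
    intro hs
    have hans : a ∉ s := fun hc => absurd (ha a hc) (lt_irrefl a)
    have hga : g a = 0 := by
      have h := congrArg (φ a) hs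
      rw [map_sum, map_zero, Finset.sum_insert hans] at h
      rw [Finset.sum_eq_zero (fun i hi => by
        rw [map_smul, h0 i a (ha i hi), smul_eq_mul, mul_zero]), add_zero,
        map_smul, h1, smul_eq_mul, mul_one] at h
      exact h
    have hs' : ∑ i ∈ s, g i • w i = 0 := by
      rw [Finset.sum_insert hans, hga, zero_smul, zero_add] at hs
      exact hs
    intro i hi
    rcases Finset.mem_insert.1 hi with rfl | hi
    · exact hga
    · exact ih hs' i hi

lemma ww_li : LinearIndependent ℝ ww :=
  li_tri ww (fun k => LinearMap.proj (qc k)) ww_diag ww_tri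

/-- The set of all deterministic vectors. -/
def DS : Set (Idx → ℝ) :=
  {v | ∃ (A : Fin 3 → MagicVA) (B : Fin 3 → MagicVB), v = detVector A B}

lemma decAB_mem_range (A : Fin 3 → MagicVA) (B : Fin 3 → MagicVB) (k l : Fin 4) :
    detVector (decA A k) (decB B l) ∈ Set.range ww := by
  have hA : ∃ i, decA A k = LA i := by
    fin_cases k
    · exact singleA_mem 0 (A 0)
    · exact singleA_mem 1 (A 1)
    · exact singleA_mem 2 (A 2)
    · refine ⟨0, ?_⟩
      funext y
      show aa 0 = LA 0 y
      show aa 0 = singleA 0 (aa 0) y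
      unfold singleA
      split <;> rfl
  have hB : ∃ j, decB B l = LB j := by
    fin_cases l
    · exact singleB_mem 0 (B 0)
    · exact singleB_mem 1 (B 1)
    · exact singleB_mem 2 (B 2)
    · refine ⟨0, ?_⟩
      funext y
      show bb 0 = LB 0 y
      show bb 0 = singleB 0 (bb 0) y
      unfold singleB
      split <;> rfl
  obtain ⟨i, hi⟩ := hA
  obtain ⟨j, hj⟩ := hB
  refine ⟨⟨i.1 * 10 + j.1, by omega⟩, ?_⟩
  unfold ww
  have h1 : kdiv ⟨i.1 * 10 + j.1, by omega⟩ = i := by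
    simp only [kdiv, Fin.ext_iff]; omega
  have h2 : kmod ⟨i.1 * 10 + j.1, by omega⟩ = j := by
    simp only [kmod, Fin.ext_iff]; omega
  rw [h1, h2, hi, hj]

lemma span_DS_eq : Submodule.span ℝ DS = Submodule.span ℝ (Set.range ww) := by
  apply le_antisymm
  · rw [Submodule.span_le]
    rintro v ⟨A, B, rfl⟩
    rw [detVector_decomp A B]
    exact Submodule.sum_mem _ fun k _ => Submodule.sum_mem _ fun l _ =>
      Submodule.smul_mem _ _ (Submodule.subset_span (decAB_mem_range A B k l))
  · rw [Submodule.span_le]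
    rintro v ⟨k, rfl⟩
    exact Submodule.subset_span ⟨LA (kdiv k), LB (kmod k), rfl⟩

lemma finrank_span_DS : Module.finrank ℝ (Submodule.span ℝ DS) = 100 := by
  rw [span_DS_eq, finrank_span_eq_card ww_li]
  simp

/-! ### The total-sum functional -/

noncomputable def L : (Idx → ℝ) →ₗ[ℝ] ℝ := ∑ q : Idx, LinearMap.proj q

lemma L_apply (v : Idx → ℝ) : L v = ∑ q : Idx, v q := by
  simp [L]

lemma L_detVector (A : Fin 3 → MagicVA) (B : Fin 3 → MagicVB) :
    L (detVector A B) = 9 := by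
  rw [L_apply]
  rw [Fintype.sum_prod_type]
  have : ∀ p : Fin 3 × Fin 3, (∑ r : MagicVA × MagicVB, detVector A B (p, r)) = 1 := by
    intro p
    rw [Fintype.sum_prod_type]
    have h1 : (∑ a : MagicVA, ∑ b : MagicVB, detVector A B (p, a, b))
        = ∑ a : MagicVA, ∑ b : MagicVB,
          (if A p.1 = a then (1:ℝ) else 0) * (if B p.2 = b then 1 else 0) :=
      Finset.sum_congr rfl fun a _ => Finset.sum_congr rfl fun b _ => detVector_eq_mul A B _
    rw [h1]
    simp [eq_comm, Finset.mul_sum]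
  rw [Finset.sum_congr rfl fun p _ => this p]
  simp

lemma L_vectorSpan : vectorSpan ℝ DS ≤ LinearMap.ker L := by
  rw [vectorSpan_def, Submodule.span_le]
  rintro x hx
  rw [Set.mem_vsub] at hx
  obtain ⟨v, hv, w, hw, rfl⟩ := hx
  obtain ⟨A, B, rfl⟩ := hv
  obtain ⟨A', B', rfl⟩ := hw
  show (detVector A B -ᵥ detVector A' B') ∈ LinearMap.ker L
  have : (detVector A B -ᵥ detVector A' B') = detVector A B - detVector A' B' := rfl
  rw [this, LinearMap.mem_ker, map_sub, L_detVector, L_detVector, sub_self]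

def v0 : Idx → ℝ := detVector (fun _ => aa 0) (fun _ => bb 0)

lemma v0_mem : v0 ∈ DS := ⟨_, _, rfl⟩

lemma L_v0 : L v0 = 9 := by unfold v0; exact L_detVector _ _

lemma v0_ne_zero : v0 ≠ 0 := by
  intro h
  have := L_v0
  rw [h, map_zero] at this
  norm_num at this

lemma sup_eq_span : vectorSpan ℝ DS ⊔ (ℝ ∙ v0) = Submodule.span ℝ DS := by
  apply le_antisymm
  · apply sup_le
    · rw [vectorSpan_def, Submodule.span_le]
      rintro x hx
      rw [Set.mem_vsub] at hx
      obtain ⟨v, hv, w, hw, rfl⟩ := hx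
      exact sub_mem (Submodule.subset_span hv) (Submodule.subset_span hw)
    · rw [Submodule.span_singleton_le_iff_mem]
      exact Submodule.subset_span v0_mem
  · rw [Submodule.span_le]
    intro v hv
    have hdecomp : v = (v - v0) + v0 := by ring_nf
    rw [hdecomp]
    refine add_mem (Submodule.mem_sup_left ?_) (Submodule.mem_sup_right
      (Submodule.mem_span_singleton_self v0))
    exact vsub_mem_vectorSpan ℝ hv v0_mem

lemma inf_eq_bot : vectorSpan ℝ DS ⊓ (ℝ ∙ v0) = ⊥ := by
  rw [eq_bot_iff]
  intro x hx
  obtain ⟨hx1, hx2⟩ := Submodule.mem_inf.1 hx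
  rw [Submodule.mem_span_singleton] at hx2
  obtain ⟨c, rfl⟩ := hx2
  have h0 : L (c • v0) = 0 := L_vectorSpan hx1
  rw [map_smul, L_v0, smul_eq_mul] at h0
  have hc : c = 0 := by linarith [h0]
  rw [hc, zero_smul]
  exact Submodule.zero_mem ⊥

lemma vs99 : Module.finrank ℝ (vectorSpan ℝ DS) = 99 := by
  have harith := Submodule.finrank_sup_add_finrank_inf_eq (vectorSpan ℝ DS) (ℝ ∙ v0)
  rw [sup_eq_span, inf_eq_bot, finrank_span_DS,
    finrank_span_singleton v0_ne_zero, finrank_bot] at harith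
  omega

end MagicAux

open MagicAux in
/-- **The local polytope `Ω₃₄` is full-dimensional in the no-signalling space.**
The affine span of all `4³ × 4³` deterministic probability vectors for the
scenario with 3 inputs and 4 outputs per party has dimension
`m²(n−1)² + 2m(n−1) = 99` (with `m = 3`, `n = 4`). -/
theorem local_polytope_full_dimensional :
    Module.finrank ℝ
      (affineSpan ℝ
        {v : ((Fin 3 × Fin 3) × MagicVA × MagicVB) → ℝ |
          ∃ (A : Fin 3 → MagicVA) (B : Fin 3 → MagicVB), v = detVector A B}).direction
      = 99 := by
  have hset : {v : ((Fin 3 × Fin 3) × MagicVA × MagicVB) → ℝ |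
      ∃ (A : Fin 3 → MagicVA) (B : Fin 3 → MagicVB), v = detVector A B} = DS := rfl
  rw [hset, direction_affineSpan]
  exact vs99
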